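/- Let 2 ≤ p < ∞. There is a constant C = C(p) > 0 such that for every Schwartz function u : ℝ → ℂ and every integer λ ≥ 1, the rescaled function u_λ(x) := λ^{−1} u(λ^{−1} x) satisfies ‖u_λ‖_{M^{2,p}} ≤ C λ^{−1/p} ‖u‖_{M^{2,p}}. -/

import Mathlib

open MeasureTheory

/-- Fourier transform with normalization `û(ξ) = (2π)^{-1/2} ∫ e^{-ixξ} u(x) dx`. -/
noncomputable def ft (f : ℝ → ℂ) (ξ : ℝ) : ℂ :=
  (((2 * Real.pi) ^ (-(1 : ℝ) / 2) : ℝ) : ℂ) *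
    ∫ x : ℝ, Complex.exp (-Complex.I * x * ξ) * f x

open FourierTransform Real in
lemma ft_eq (f : ℝ → ℂ) (ξ : ℝ) :
    ft f ξ = (((2 * Real.pi) ^ (-(1 : ℝ) / 2) : ℝ) : ℂ) * 𝓕 f (ξ / (2 * Real.pi)) := by
  rw [ft, Real.fourier_eq']
  congr 1
  refine integral_congr_ae (Filter.Eventually.of_forall fun v => ?_)
  have h : -2 * π * (inner ℝ v (ξ / (2 * π)) : ℝ) = -(v * ξ) := by
    simp only [RCLike.inner_apply, starRingEnd_apply, star_trivial]
    have : (π : ℝ) ≠ 0 := Real.pi_ne_zero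
    field_simp
  show Complex.exp (-Complex.I * v * ξ) * f v
      = Complex.exp (((-2 * π * (inner ℝ v (ξ / (2 * π)) : ℝ) : ℝ) : ℂ) * Complex.I) • f v
  rw [h, smul_eq_mul]
  push_cast
  ring_nf

lemma ft_schwartz (u : SchwartzMap ℝ ℂ) :
    ft ⇑u = fun ξ => (((2 * Real.pi) ^ (-(1 : ℝ) / 2) : ℝ) : ℂ) *
      (SchwartzMap.fourierTransformCLM ℝ u) (ξ / (2 * Real.pi)) := by
  funext ξ
  rw [ft_eq]
  simp [SchwartzMap.fourierTransformCLM_apply, SchwartzMap.fourier_coe]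

lemma ft_continuous (u : SchwartzMap ℝ ℂ) : Continuous (ft ⇑u) := by
  rw [ft_schwartz]
  exact continuous_const.mul ((SchwartzMap.continuous _).comp (continuous_id.div_const _))

lemma ft_decay (u : SchwartzMap ℝ ℂ) :
    ∃ D : ℝ, 0 < D ∧ ∀ ξ : ℝ, ‖ft (⇑u) ξ‖ ≤ D / (1 + |ξ|) ^ 2 := by
  set F := SchwartzMap.fourierTransformCLM ℝ u
  obtain ⟨C₀, hC₀, h₀⟩ := F.decay 0 0
  obtain ⟨C₂, hC₂, h₂⟩ := F.decay 2 0
  set c : ℝ := (2 * Real.pi) ^ (-(1 : ℝ) / 2) with hc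
  have hcpos : 0 < c := Real.rpow_pos_of_pos (by positivity) _
  refine ⟨c * (98 * (C₀ + C₂)) + 1, by positivity, fun ξ => ?_⟩
  have key : ∀ y : ℝ, (1 + |y|) ^ 2 * ‖F y‖ ≤ 2 * (C₀ + C₂) := by
    intro y
    have e0 := h₀ y
    have e2 := h₂ y
    simp only [norm_iteratedFDeriv_zero, pow_zero, one_mul, Real.norm_eq_abs] at e0 e2
    nlinarith [abs_nonneg y, norm_nonneg (F y), sq_abs y, sq_nonneg (1 - |y|)]
  have hξy : ξ / (2 * Real.pi) = ξ / (2 * Real.pi) := rfl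
  set y := ξ / (2 * Real.pi) with hy
  have hπ : (0:ℝ) < 2 * Real.pi := by positivity
  have h7 : 2 * Real.pi ≤ 7 := by nlinarith [Real.pi_lt_d2]
  have hord : 1 + |ξ| ≤ 7 * (1 + |y|) := by
    have : |ξ| = (2 * Real.pi) * |y| := by
      rw [hy, abs_div, abs_of_pos hπ]
      field_simp
    nlinarith [abs_nonneg y]
  have hnormft : ‖ft (⇑u) ξ‖ = c * ‖F y‖ := by
    rw [ft_schwartz]
    simp only [norm_mul, Complex.norm_real, Real.norm_eq_abs, abs_of_pos hcpos]
    rw [← hc, abs_of_pos hcpos]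
  have hbase : (0:ℝ) < (1 + |ξ|) ^ 2 := by positivity
  rw [hnormft, le_div_iff₀ hbase]
  have h1 : (1 + |ξ|) ^ 2 ≤ 49 * (1 + |y|) ^ 2 := by nlinarith [abs_nonneg y, abs_nonneg ξ]
  nlinarith [mul_le_mul_of_nonneg_left h1 (mul_nonneg hcpos.le (norm_nonneg (F y))),
    mul_le_mul_of_nonneg_left (key y) (by positivity : (0:ℝ) ≤ 49 * c),
    norm_nonneg (F y)]

lemma ft_scale (u : SchwartzMap ℝ ℂ) (lam : ℤ) (hlam : 1 ≤ lam) (ξ : ℝ) :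
    ft (fun x => ((lam : ℂ))⁻¹ * u (((lam : ℝ))⁻¹ * x)) ξ = ft (⇑u) ((lam : ℝ) * ξ) := by
  have hL : (0:ℝ) < (lam : ℝ) := by exact_mod_cast lt_of_lt_of_le zero_lt_one hlam
  set L : ℝ := (lam : ℝ) with hLdef
  rw [ft, ft]
  congr 1
  set G : ℝ → ℂ := fun x => Complex.exp (-Complex.I * x * ξ) * ((lam : ℂ)⁻¹ * u (L⁻¹ * x))
    with hG
  have h2 : ∀ x : ℝ, G (L * x) = (lam : ℂ)⁻¹ • (Complex.exp (-Complex.I * x * (L * ξ)) * u x) := by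
    intro x
    rw [hG]
    simp only [inv_mul_cancel_left₀ (ne_of_gt hL), smul_eq_mul]
    push_cast
    ring_nf
  have h1 : (∫ x : ℝ, G (L * x)) = |L⁻¹| • ∫ y, G y :=
    MeasureTheory.Measure.integral_comp_mul_left G L
  have h3 : (∫ y, G y) = L • ∫ x : ℝ, G (L * x) := by
    rw [h1, smul_smul, abs_of_pos (inv_pos.2 hL), mul_inv_cancel₀ hL.ne', one_smul]
  calc (∫ x : ℝ, Complex.exp (-Complex.I * x * ξ) * ((lam : ℂ)⁻¹ * u (L⁻¹ * x)))
      = ∫ y, G y := rfl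
    _ = L • ∫ x : ℝ, G (L * x) := h3
    _ = L • ((lam : ℂ)⁻¹ • ∫ x : ℝ, Complex.exp (-Complex.I * x * (L * ξ)) * u x) := by
        simp_rw [h2]; rw [integral_smul]
    _ = ∫ x : ℝ, Complex.exp (-Complex.I * x * (L * ξ)) * u x := by
        rw [smul_eq_mul, Complex.real_smul, ← mul_assoc,
          show ((L : ℝ) : ℂ) = (lam : ℂ) by rw [hLdef]; push_cast; ring,
          mul_inv_cancel₀ (Int.cast_ne_zero.2 (by omega) : (lam : ℂ) ≠ 0), one_mul]
  · push_cast
    ring_nf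

lemma setIntegral_scale (h : ℝ → ℝ) {L a b : ℝ} (hL : 0 < L) (hab : a ≤ b) :
    ∫ ξ in Set.Ico a b, h (L * ξ) = L⁻¹ * ∫ ξ in Set.Ico (L * a) (L * b), h ξ := by
  have hab' : L * a ≤ L * b := by nlinarith
  rw [integral_Ico_eq_integral_Ioo, integral_Ico_eq_integral_Ioo,
      ← integral_Ioc_eq_integral_Ioo, ← integral_Ioc_eq_integral_Ioo,
      ← intervalIntegral.integral_of_le hab, ← intervalIntegral.integral_of_le hab',
      intervalIntegral.integral_comp_mul_left _ hL.ne', smul_eq_mul]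

lemma nonneg_sq_int (g : ℝ → ℂ) (c d : ℝ) :
    0 ≤ ∫ ξ in Set.Ico c d, ‖g ξ‖^2 :=
  setIntegral_nonneg measurableSet_Ico (fun x _ => by positivity)

lemma integrableOn_sq {g : ℝ → ℂ} (hg : Continuous g) (c d : ℝ) :
    IntegrableOn (fun ξ => ‖g ξ‖^2) (Set.Ico c d) volume :=
  ((hg.norm.pow 2).continuousOn.integrableOn_compact isCompact_Icc).mono_set
    Set.Ico_subset_Icc_self

lemma integral_Ico_le_sum (g : ℝ → ℂ) (hg : Continuous g) (lam n : ℤ) (hlam : 1 ≤ lam) :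
    ∫ ξ in Set.Ico ((lam:ℝ) * ((n:ℝ) - 1/2)) ((lam:ℝ) * ((n:ℝ) + 1/2)), ‖g ξ‖^2 ≤
      ∑ m ∈ Finset.Icc (lam*n - lam) (lam*n + lam),
        ∫ ξ in Set.Ico ((m:ℝ) - 1/2) ((m:ℝ) + 1/2), ‖g ξ‖^2 := by
  have hL : (1:ℝ) ≤ (lam:ℝ) := by exact_mod_cast hlam
  set S := Finset.Icc (lam*n - lam) (lam*n + lam) with hS
  set U := ⋃ m ∈ S, Set.Ico ((m:ℝ) - 1/2) ((m:ℝ) + 1/2) with hU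
  have hint : IntegrableOn (fun ξ => ‖g ξ‖^2) U volume := by
    rw [hU]
    exact integrableOn_finset_iUnion.2 fun m _ => integrableOn_sq hg _ _
  have hsub : Set.Ico ((lam:ℝ) * ((n:ℝ) - 1/2)) ((lam:ℝ) * ((n:ℝ) + 1/2)) ⊆ U := by
    intro ξ hξ
    obtain ⟨h1, h2⟩ := hξ
    set m : ℤ := ⌊ξ + 1/2⌋ with hm
    have hm1 : (m:ℝ) ≤ ξ + 1/2 := Int.floor_le _
    have hm2 : ξ + 1/2 < (m:ℝ) + 1 := Int.lt_floor_add_one _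
    have hmem : m ∈ S := by
      rw [hS, Finset.mem_Icc]
      constructor
      · have : ((lam*n - lam : ℤ):ℝ) < (m:ℝ) := by push_cast; nlinarith
        exact_mod_cast le_of_lt (by exact_mod_cast this)
      · have : (m:ℝ) < ((lam*n + lam : ℤ):ℝ) := by push_cast; nlinarith
        exact_mod_cast le_of_lt (by exact_mod_cast this)
    exact Set.mem_biUnion hmem ⟨by linarith, by linarith⟩
  have hdisj : (↑S : Set ℤ).Pairwise
      (Function.onFun Disjoint fun m => Set.Ico ((m:ℝ) - 1/2) ((m:ℝ) + 1/2)) := by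
    intro m _ m' _ hne
    rcases lt_or_gt_of_ne hne with hlt | hlt
    · have h1 : (m:ℝ) + 1 ≤ (m':ℝ) := by exact_mod_cast hlt
      exact Set.Ico_disjoint_Ico.2
        (le_trans (min_le_left _ _) (le_trans (by linarith) (le_max_right _ _)))
    · have h1 : (m':ℝ) + 1 ≤ (m:ℝ) := by exact_mod_cast hlt
      exact Set.Ico_disjoint_Ico.2
        (le_trans (min_le_right _ _) (le_trans (by linarith) (le_max_left _ _)))
  calc ∫ ξ in Set.Ico ((lam:ℝ) * ((n:ℝ) - 1/2)) ((lam:ℝ) * ((n:ℝ) + 1/2)), ‖g ξ‖^2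
      ≤ ∫ ξ in U, ‖g ξ‖^2 := by
        refine setIntegral_mono_set hint ?_ (HasSubset.Subset.eventuallyLE hsub)
        exact Filter.Eventually.of_forall fun x => by positivity
    _ = ∑ m ∈ S, ∫ ξ in Set.Ico ((m:ℝ) - 1/2) ((m:ℝ) + 1/2), ‖g ξ‖^2 := by
        rw [hU]
        exact integral_biUnion_finset S (fun m _ => measurableSet_Ico) hdisj
          (fun m _ => integrableOn_sq hg _ _)

lemma sum_rpow_le {ι : Type*} (s : Finset ι) (f : ι → ℝ) (hf : ∀ i ∈ s, 0 ≤ f i) {r : ℝ}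
    (hr : 1 ≤ r) :
    (∑ i ∈ s, f i) ^ r ≤ (s.card : ℝ) ^ (r - 1) * ∑ i ∈ s, f i ^ r := by
  rcases Finset.eq_empty_or_nonempty s with rfl | hs
  · simp [Real.zero_rpow (by linarith : r ≠ 0)]
  have hN : (0:ℝ) < (s.card : ℝ) := by exact_mod_cast hs.card_pos
  have key := Real.rpow_arith_mean_le_arith_mean_rpow s (fun _ => ((s.card : ℝ))⁻¹) f
      (fun i _ => by positivity) (by rw [Finset.sum_const, nsmul_eq_mul, mul_inv_cancel₀ hN.ne']) hf hr
  rw [← Finset.mul_sum, ← Finset.mul_sum,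
      Real.mul_rpow (by positivity) (Finset.sum_nonneg hf), Real.inv_rpow hN.le] at key
  have hcr : (0:ℝ) < (s.card : ℝ) ^ r := Real.rpow_pos_of_pos hN _
  calc (∑ i ∈ s, f i) ^ r
      = (s.card : ℝ) ^ r * (((s.card : ℝ) ^ r)⁻¹ * (∑ i ∈ s, f i) ^ r) := by
        field_simp
    _ ≤ (s.card : ℝ) ^ r * (((s.card : ℝ))⁻¹ * ∑ i ∈ s, f i ^ r) :=
        mul_le_mul_of_nonneg_left key hcr.le
    _ = (s.card : ℝ) ^ (r - 1) * ∑ i ∈ s, f i ^ r := by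
        rw [← mul_assoc, ← Real.rpow_neg_one (s.card : ℝ), ← Real.rpow_add hN]
        ring_nf

lemma summable_base : Summable (fun m : ℤ => (1 + |(m:ℝ)|) ^ (-2 : ℝ)) := by
  have hg : Summable (fun m : ℤ => |(m:ℝ)| ^ (-2 : ℝ)) :=
    Real.summable_abs_int_rpow (by norm_num)
  have hh : Summable (fun m : ℤ => if m = 0 then (1:ℝ) else 0) :=
    summable_of_ne_finset_zero (s := {0}) (fun m hm => by
      simp only [Finset.mem_singleton] at hm; simp [hm])
  refine Summable.of_nonneg_of_le (fun m => by positivity) (fun m => ?_) (hg.add hh)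
  by_cases hm : m = 0
  · simp [hm]
  · have h0 : (0:ℝ) < |(m:ℝ)| := by
      simp only [abs_pos, ne_eq, Int.cast_eq_zero]; exact hm
    have : (1 + |(m:ℝ)|) ^ (-2 : ℝ) ≤ |(m:ℝ)| ^ (-2 : ℝ) :=
      Real.rpow_le_rpow_of_nonpos h0 (by linarith) (by norm_num)
    simp only [Pi.add_apply, hm, if_false, add_zero]
    linarith

lemma b_bound (g : ℝ → ℂ) (hg : Continuous g) (D : ℝ) (hD : 0 < D)
    (hdec : ∀ ξ : ℝ, ‖g ξ‖ ≤ D / (1 + |ξ|) ^ 2) (m : ℤ) :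
    ∫ ξ in Set.Ico ((m:ℝ) - 1/2) ((m:ℝ) + 1/2), ‖g ξ‖^2
      ≤ 16 * D^2 * (1 + |(m:ℝ)|) ^ (-4 : ℝ) := by
  have hmpos : (0:ℝ) < 1 + |(m:ℝ)| := by positivity
  have hrw : (1 + |(m:ℝ)|) ^ (-4 : ℝ) = ((1 + |(m:ℝ)|) ^ (4:ℕ))⁻¹ := by
    rw [show (-4:ℝ) = -((4:ℕ):ℝ) by norm_num, Real.rpow_neg hmpos.le, Real.rpow_natCast]
  have hpt : ∀ ξ ∈ Set.Ico ((m:ℝ) - 1/2) ((m:ℝ) + 1/2),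
      ‖g ξ‖^2 ≤ 16 * D^2 * (1 + |(m:ℝ)|) ^ (-4 : ℝ) := by
    intro ξ hξ
    obtain ⟨h1, h2⟩ := hξ
    have habs : |(m:ℝ)| ≤ |ξ| + 1/2 := by
      have := abs_sub_abs_le_abs_sub (m:ℝ) ξ
      have : |(m:ℝ) - ξ| ≤ 1/2 := abs_le.2 ⟨by linarith, by linarith⟩
      cases abs_cases ((m:ℝ) - ξ) <;> cases abs_cases (m:ℝ) <;> cases abs_cases ξ <;> linarith
    have hξpos : (0:ℝ) < 1 + |ξ| := by positivity
    have hhalf : (1 + |(m:ℝ)|) / 2 ≤ 1 + |ξ| := by linarith [abs_nonneg ξ]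
    have hsq : ‖g ξ‖^2 ≤ (D / (1 + |ξ|)^2)^2 :=
      pow_le_pow_left₀ (norm_nonneg _) (hdec ξ) 2
    have hp4 : ((1 + |(m:ℝ)|) / 2)^4 ≤ (1 + |ξ|)^4 :=
      pow_le_pow_left₀ (by positivity) hhalf 4
    have : (D / (1 + |ξ|)^2)^2 ≤ 16 * D^2 * ((1 + |(m:ℝ)|) ^ (4:ℕ))⁻¹ := by
      rw [div_pow, ← pow_mul]
      rw [div_le_iff₀ (by positivity)]
      have h16 : (1 + |(m:ℝ)|)^4 ≤ 16 * (1 + |ξ|)^(2*2) := by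
        calc (1 + |(m:ℝ)|)^4 = 16 * ((1 + |(m:ℝ)|)/2)^4 := by ring
          _ ≤ 16 * (1 + |ξ|)^(2*2) := by
              rw [show 2*2 = 4 from rfl]; linarith
      calc D^2 = (D^2 * ((1 + |(m:ℝ)|) ^ (4:ℕ))⁻¹) * (1 + |(m:ℝ)|)^4 := by
            field_simp
        _ ≤ (D^2 * ((1 + |(m:ℝ)|) ^ (4:ℕ))⁻¹) * (16 * (1 + |ξ|)^(2*2)) := by
            apply mul_le_mul_of_nonneg_left h16 (by positivity)
        _ = 16 * D^2 * ((1 + |(m:ℝ)|) ^ (4:ℕ))⁻¹ * (1 + |ξ|)^(2*2) := by ring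
    rw [hrw]
    linarith
  calc ∫ ξ in Set.Ico ((m:ℝ) - 1/2) ((m:ℝ) + 1/2), ‖g ξ‖^2
      ≤ ∫ _ in Set.Ico ((m:ℝ) - 1/2) ((m:ℝ) + 1/2),
          (16 * D^2 * (1 + |(m:ℝ)|) ^ (-4 : ℝ)) := by
        exact setIntegral_mono_on (integrableOn_sq hg _ _)
          (integrableOn_const (by rw [Real.volume_Ico]; exact ENNReal.ofReal_ne_top))
          measurableSet_Ico hpt
    _ = 16 * D^2 * (1 + |(m:ℝ)|) ^ (-4 : ℝ) := by
        rw [setIntegral_const, Real.volume_real_Ico]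
        norm_num

/-- Modulation space norm `‖f‖_{M_s^{2,p}}` with `I_n = [n - 1/2, n + 1/2)`. -/
noncomputable def modNorm (p s : ℝ) (f : ℝ → ℂ) : ℝ :=
  (∑' n : ℤ, (1 + |(n : ℝ)|) ^ (s * p) *
      (∫ ξ in Set.Ico ((n : ℝ) - 1 / 2) ((n : ℝ) + 1 / 2), ‖ft f ξ‖ ^ 2) ^ (p / 2)) ^ (1 / p)

theorem scaling_modulation_norm (p : ℝ) (hp : 2 ≤ p) :
    ∃ C : ℝ, 0 < C ∧ ∀ (u : SchwartzMap ℝ ℂ) (lam : ℤ), 1 ≤ lam →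
      modNorm p 0 (fun x => ((lam : ℂ))⁻¹ * u (((lam : ℝ))⁻¹ * x)) ≤
        C * ((lam : ℝ)) ^ (-(1 / p)) * modNorm p 0 (fun x => u x) := by
  refine ⟨3, by norm_num, fun u lam hlam => ?_⟩
  have hp0 : (0:ℝ) < p := by linarith
  set r : ℝ := p / 2 with hrdef
  have hr1 : 1 ≤ r := by rw [hrdef]; linarith
  have hr0 : 0 < r := by linarith
  have hL0 : (0:ℝ) < (lam:ℝ) := by exact_mod_cast lt_of_lt_of_le zero_lt_one hlam
  have hL1 : (1:ℝ) ≤ (lam:ℝ) := by exact_mod_cast hlam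
  set L : ℝ := (lam:ℝ) with hLdef
  set g : ℝ → ℂ := ft ⇑u with hgdef
  have hgcont : Continuous g := ft_continuous u
  obtain ⟨D, hD, hdec⟩ := ft_decay u
  set b : ℤ → ℝ := fun m => ∫ ξ in Set.Ico ((m:ℝ) - 1/2) ((m:ℝ) + 1/2), ‖g ξ‖^2 with hbdef
  have hbnn : ∀ m, 0 ≤ b m := fun m => nonneg_sq_int g _ _
  -- summability of b^r
  have hbr_summ : Summable (fun m : ℤ => b m ^ r) := by
    refine Summable.of_nonneg_of_le (fun m => Real.rpow_nonneg (hbnn m) r) (fun m => ?_)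
      ((summable_base.mul_left ((16 * D^2 + 1) ^ r)))
    have h1 : b m ^ r ≤ (16 * D^2 * (1 + |(m:ℝ)|) ^ (-4 : ℝ)) ^ r :=
      Real.rpow_le_rpow (hbnn m) (b_bound g hgcont D hD hdec m) hr0.le
    have hmpos : (0:ℝ) < 1 + |(m:ℝ)| := by positivity
    have h2 : (16 * D^2 * (1 + |(m:ℝ)|) ^ (-4 : ℝ)) ^ r
        = (16 * D^2) ^ r * (1 + |(m:ℝ)|) ^ ((-4) * r) := by
      rw [Real.mul_rpow (by positivity) (by positivity), ← Real.rpow_mul hmpos.le]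
    have h3 : (1 + |(m:ℝ)|) ^ ((-4) * r) ≤ (1 + |(m:ℝ)|) ^ (-2 : ℝ) :=
      Real.rpow_le_rpow_of_exponent_le (by simp [abs_nonneg]) (by nlinarith)
    have h4 : (16 * D^2) ^ r ≤ (16 * D^2 + 1) ^ r :=
      Real.rpow_le_rpow (by positivity) (by linarith) hr0.le
    calc b m ^ r ≤ (16 * D^2) ^ r * (1 + |(m:ℝ)|) ^ ((-4) * r) := by rw [← h2]; exact h1
      _ ≤ (16 * D^2 + 1) ^ r * (1 + |(m:ℝ)|) ^ (-2:ℝ) := by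
          apply mul_le_mul h4 h3 (by positivity) (by positivity)
  set Bsum : ℝ := ∑' m : ℤ, b m ^ r with hBsumdef
  have hBsum_nn : 0 ≤ Bsum := tsum_nonneg fun m => Real.rpow_nonneg (hbnn m) r
  set S : ℤ → Finset ℤ := fun n => Finset.Icc (lam*n - lam) (lam*n + lam) with hSdef
  set t : ℤ → ℝ := fun n =>
    (L⁻¹ * ∫ ξ in Set.Ico (L * ((n:ℝ) - 1/2)) (L * ((n:ℝ) + 1/2)), ‖g ξ‖^2) ^ r with htdef
  have htnn : ∀ n, 0 ≤ t n := fun n =>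
    Real.rpow_nonneg (mul_nonneg (by positivity) (nonneg_sq_int g _ _)) r
  set K : ℝ := 3 ^ (r - 1) * L⁻¹ with hKdef
  have hK0 : 0 < K := by positivity
  -- pointwise bound on t n
  have hcard : ∀ n : ℤ, ((S n).card : ℝ) ≤ 3 * L := by
    intro n
    rw [hSdef]
    simp only [Int.card_Icc]
    have : (lam*n + lam + 1 - (lam*n - lam)) = 2*lam + 1 := by ring
    rw [this]
    have h6 : ((2*lam+1).toNat : ℤ) = 2*lam+1 := Int.toNat_of_nonneg (by omega)
    have h7 : (((2*lam+1).toNat : ℤ) : ℝ) = ((2*lam+1 : ℤ) : ℝ) := by rw [h6]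
    push_cast at h7 ⊢
    rw [h7, ← hLdef]
    linarith
  have htb : ∀ n : ℤ, t n ≤ K * ∑ m ∈ S n, b m ^ r := by
    intro n
    have hAle : (∫ ξ in Set.Ico (L * ((n:ℝ) - 1/2)) (L * ((n:ℝ) + 1/2)), ‖g ξ‖^2)
        ≤ ∑ m ∈ S n, b m := integral_Ico_le_sum g hgcont lam n hlam
    have hAnn : (0:ℝ) ≤ ∫ ξ in Set.Ico (L * ((n:ℝ) - 1/2)) (L * ((n:ℝ) + 1/2)), ‖g ξ‖^2 :=
      nonneg_sq_int g _ _
    have h1 : t n ≤ (L⁻¹ * ∑ m ∈ S n, b m) ^ r := by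
      rw [htdef]
      exact Real.rpow_le_rpow (mul_nonneg (by positivity) hAnn)
        (mul_le_mul_of_nonneg_left hAle (by positivity)) hr0.le
    have h2 : (L⁻¹ * ∑ m ∈ S n, b m) ^ r
        = (L⁻¹) ^ r * (∑ m ∈ S n, b m) ^ r :=
      Real.mul_rpow (by positivity) (Finset.sum_nonneg fun m _ => hbnn m)
    have h3 : (∑ m ∈ S n, b m) ^ r ≤ ((S n).card : ℝ) ^ (r-1) * ∑ m ∈ S n, b m ^ r :=
      sum_rpow_le (S n) b (fun m _ => hbnn m) hr1
    have h4 : ((S n).card : ℝ) ^ (r-1) ≤ (3*L) ^ (r-1) :=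
      Real.rpow_le_rpow (by positivity) (hcard n) (by linarith)
    have h5 : (L⁻¹) ^ r * ((3*L) ^ (r-1)) = K := by
      rw [hKdef, Real.mul_rpow (by norm_num) hL0.le, Real.inv_rpow hL0.le]
      have hLr : L ^ r = L ^ (r-1) * L := by
        rw [← Real.rpow_add_one hL0.ne' (r-1)]
        norm_num
      rw [hLr]
      have h6 : (0:ℝ) < L ^ (r-1) := Real.rpow_pos_of_pos hL0 _
      field_simp
    calc t n ≤ (L⁻¹) ^ r * (∑ m ∈ S n, b m) ^ r := by rw [← h2]; exact h1
      _ ≤ (L⁻¹) ^ r * (((S n).card : ℝ) ^ (r-1) * ∑ m ∈ S n, b m ^ r) := by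
          apply mul_le_mul_of_nonneg_left h3 (by positivity)
      _ ≤ (L⁻¹) ^ r * ((3*L) ^ (r-1) * ∑ m ∈ S n, b m ^ r) := by
          apply mul_le_mul_of_nonneg_left
            (mul_le_mul_of_nonneg_right h4 (Finset.sum_nonneg fun m _ => Real.rpow_nonneg (hbnn m) r))
            (by positivity)
      _ = K * ∑ m ∈ S n, b m ^ r := by rw [← h5]; ring
  -- ENNReal chain
  set c : ℤ → ENNReal := fun m => ENNReal.ofReal (K * b m ^ r) with hcdef
  have step1 : ∀ n : ℤ, ENNReal.ofReal (t n) ≤ ∑ m ∈ S n, c m := by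
    intro n
    calc ENNReal.ofReal (t n) ≤ ENNReal.ofReal (∑ m ∈ S n, K * b m ^ r) := by
          apply ENNReal.ofReal_le_ofReal
          rw [← Finset.mul_sum]; exact htb n
      _ = ∑ m ∈ S n, c m :=
          ENNReal.ofReal_sum_of_nonneg
            (fun m _ => mul_nonneg hK0.le (Real.rpow_nonneg (hbnn m) r))
  have step2 : ∀ n : ℤ, ∑ m ∈ S n, c m = ∑' m : ℤ, (if m ∈ S n then c m else 0) := by
    intro n
    have e := tsum_eq_sum (L := SummationFilter.unconditional ℤ) (s := S n) (f := fun m : ℤ => if m ∈ S n then c m else 0)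
      (fun m hm => if_neg hm)
    rw [e]
    exact Finset.sum_congr rfl fun m hm => (if_pos hm).symm
  have fib : ∀ m n : ℤ, m ∈ S n → n ∈ Finset.Icc (⌊(m:ℝ)/L⌋ - 1) (⌊(m:ℝ)/L⌋ + 1) := by
    intro m n hm
    rw [hSdef, Finset.mem_Icc] at hm
    obtain ⟨h1, h2⟩ := hm
    have h1' : ((lam*n - lam : ℤ) : ℝ) ≤ (m:ℝ) := by exact_mod_cast h1
    have h2' : (m:ℝ) ≤ ((lam*n + lam : ℤ) : ℝ) := by exact_mod_cast h2
    push_cast at h1' h2'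
    rw [← hLdef] at h1' h2'
    have hlow : ((n:ℤ) - 1 : ℤ) ≤ ⌊(m:ℝ)/L⌋ := by
      apply Int.le_floor.2
      push_cast
      rw [le_div_iff₀ hL0]
      nlinarith
    have hhigh : ⌊(m:ℝ)/L⌋ ≤ (n:ℤ) + 1 := by
      have hfl : ((⌊(m:ℝ)/L⌋ : ℤ) : ℝ) ≤ (m:ℝ)/L := Int.floor_le _
      have : (m:ℝ)/L ≤ (n:ℝ) + 1 := by
        rw [div_le_iff₀ hL0]
        nlinarith
      have : ((⌊(m:ℝ)/L⌋ : ℤ) : ℝ) ≤ (((n:ℤ) + 1 : ℤ) : ℝ) := by push_cast; linarith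
      exact_mod_cast this
    rw [Finset.mem_Icc]
    omega
  have step3 : ∀ m : ℤ, (∑' n : ℤ, if m ∈ S n then c m else 0) ≤ 3 * c m := by
    intro m
    set T : Finset ℤ := Finset.Icc (⌊(m:ℝ)/L⌋ - 1) (⌊(m:ℝ)/L⌋ + 1) with hT
    have hTcard : T.card = 3 := by
      rw [hT, Int.card_Icc]
      omega
    calc (∑' n : ℤ, if m ∈ S n then c m else 0)
        ≤ ∑' n : ℤ, (if n ∈ T then c m else 0) := by
          apply ENNReal.tsum_le_tsum
          intro n
          by_cases h : m ∈ S n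
          · rw [if_pos h, if_pos (fib m n h)]
          · simp [h]
      _ = ∑ n ∈ T, (if n ∈ T then c m else 0) :=
          tsum_eq_sum (s := T) (f := fun n => if n ∈ T then c m else 0)
            (fun n hn => if_neg hn)
      _ = ∑ _n ∈ T, c m := Finset.sum_congr rfl fun n hn => if_pos hn
      _ = 3 * c m := by rw [Finset.sum_const, hTcard]; simp [mul_comm]
  have chain : ∑' n : ℤ, ENNReal.ofReal (t n) ≤ ENNReal.ofReal (3 * K * Bsum) := by
    calc ∑' n : ℤ, ENNReal.ofReal (t n)
        ≤ ∑' n : ℤ, ∑ m ∈ S n, c m := ENNReal.tsum_le_tsum step1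
      _ = ∑' n : ℤ, ∑' m : ℤ, (if m ∈ S n then c m else 0) := tsum_congr step2
      _ = ∑' m : ℤ, ∑' n : ℤ, (if m ∈ S n then c m else 0) := ENNReal.tsum_comm
      _ ≤ ∑' m : ℤ, 3 * c m := ENNReal.tsum_le_tsum step3
      _ = 3 * ∑' m : ℤ, c m := ENNReal.tsum_mul_left
      _ = 3 * (ENNReal.ofReal K * ∑' m : ℤ, ENNReal.ofReal (b m ^ r)) := by
          simp_rw [hcdef, ENNReal.ofReal_mul hK0.le]
          rw [ENNReal.tsum_mul_left]
      _ = ENNReal.ofReal (3 * K * Bsum) := by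
          rw [← ENNReal.ofReal_tsum_of_nonneg (fun m => Real.rpow_nonneg (hbnn m) r) hbr_summ,
              ← hBsumdef, ← ENNReal.ofReal_mul hK0.le,
              show (3 : ENNReal) = ENNReal.ofReal (3:ℝ) by norm_num,
              ← ENNReal.ofReal_mul (by norm_num)]
          congr 1
          ring
  have htsummable : Summable t := by
    have hne : (∑' n : ℤ, ENNReal.ofReal (t n)) ≠ ⊤ :=
      (lt_of_le_of_lt chain ENNReal.ofReal_lt_top).ne
    exact (ENNReal.summable_toReal hne).congr fun n => ENNReal.toReal_ofReal (htnn n)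
  have htsum_le : ∑' n : ℤ, t n ≤ 3 * K * Bsum := by
    have e1 : ∑' n : ℤ, t n = (∑' n : ℤ, ENNReal.ofReal (t n)).toReal := by
      rw [ENNReal.tsum_toReal_eq (fun n => ENNReal.ofReal_ne_top)]
      exact tsum_congr fun n => (ENNReal.toReal_ofReal (htnn n)).symm
    rw [e1]
    calc (∑' n : ℤ, ENNReal.ofReal (t n)).toReal
        ≤ (ENNReal.ofReal (3 * K * Bsum)).toReal :=
          ENNReal.toReal_mono ENNReal.ofReal_ne_top chain
      _ = 3 * K * Bsum := ENNReal.toReal_ofReal (by positivity)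
  -- identify the modulation norms
  have hmod1 : modNorm p 0 (fun x => ((lam : ℂ))⁻¹ * u (((lam : ℝ))⁻¹ * x))
      = (∑' n : ℤ, t n) ^ (1/p) := by
    rw [modNorm]
    congr 1
    apply tsum_congr
    intro n
    rw [zero_mul, Real.rpow_zero, one_mul, htdef]
    congr 1
    have hptw : ∀ ξ : ℝ, ‖ft (fun x => ((lam : ℂ))⁻¹ * u (((lam : ℝ))⁻¹ * x)) ξ‖^2
        = ‖g (L * ξ)‖^2 := by
      intro ξ
      rw [ft_scale u lam hlam]
    calc (∫ ξ in Set.Ico ((n:ℝ) - 1/2) ((n:ℝ) + 1/2),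
            ‖ft (fun x => ((lam : ℂ))⁻¹ * u (((lam : ℝ))⁻¹ * x)) ξ‖^2)
        = ∫ ξ in Set.Ico ((n:ℝ) - 1/2) ((n:ℝ) + 1/2), ‖g (L * ξ)‖^2 := by
          exact setIntegral_congr_fun measurableSet_Ico fun ξ _ => hptw ξ
      _ = L⁻¹ * ∫ ξ in Set.Ico (L * ((n:ℝ) - 1/2)) (L * ((n:ℝ) + 1/2)), ‖g ξ‖^2 :=
          setIntegral_scale (fun ξ => ‖g ξ‖^2) hL0 (by linarith)
  have hmod2 : modNorm p 0 (fun x => u x) = Bsum ^ (1/p) := by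
    rw [modNorm, hBsumdef]
    congr 1
    apply tsum_congr
    intro m
    rw [zero_mul, Real.rpow_zero, one_mul]
  rw [hmod1, hmod2]
  have h1 : (∑' n : ℤ, t n) ^ (1/p) ≤ (3 * K * Bsum) ^ (1/p) :=
    Real.rpow_le_rpow (tsum_nonneg htnn) htsum_le (by positivity)
  have h2 : 3 * K * Bsum = 3 ^ r * (L⁻¹ * Bsum) := by
    rw [hKdef, show r = (r-1) + 1 by ring, Real.rpow_add_one (by norm_num : (3:ℝ) ≠ 0)]
    ring_nf
  have h3 : (3 * K * Bsum) ^ (1/p) = (3:ℝ) ^ (r * (1/p)) * ((L⁻¹ * Bsum) ^ (1/p)) := by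
    rw [h2, Real.mul_rpow (by positivity) (by positivity), Real.rpow_mul (by norm_num)]
  have h4 : (3:ℝ) ^ (r * (1/p)) ≤ 3 := by
    calc (3:ℝ) ^ (r * (1/p)) ≤ (3:ℝ) ^ (1:ℝ) := by
          apply Real.rpow_le_rpow_of_exponent_le (by norm_num)
          rw [hrdef]
          rw [show p/2 * (1/p) = 1/2 by field_simp]
          norm_num
      _ = 3 := Real.rpow_one 3
  have h5 : (L⁻¹ * Bsum) ^ (1/p) = L ^ (-(1/p)) * Bsum ^ (1/p) := by
    rw [Real.mul_rpow (by positivity) hBsum_nn, ← Real.rpow_neg_one L,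
        ← Real.rpow_mul hL0.le]
    norm_num
  calc (∑' n : ℤ, t n) ^ (1/p) ≤ (3 * K * Bsum) ^ (1/p) := h1
    _ = (3:ℝ) ^ (r * (1/p)) * ((L⁻¹ * Bsum) ^ (1/p)) := h3
    _ ≤ 3 * ((L⁻¹ * Bsum) ^ (1/p)) :=
        mul_le_mul_of_nonneg_right h4 (Real.rpow_nonneg (by positivity) _)
    _ = 3 * (L ^ (-(1/p)) * Bsum ^ (1/p)) := by rw [h5]
    _ = 3 * L ^ (-(1/p)) * Bsum ^ (1/p) := by ring
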